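/- Let $\mathcal{F} = \{\phi_i : i \in A\}$ be an IFS of contractions with positive Lipschitz constants over a complete metric space whose attractor $K$ is connected, has positive diameter, and such that $\mathcal{F}$ has no branching. Then for each $n$, the intersection graph $G_n$ — with vertex set $A^n$ and an edge between distinct $w,u \in A^n$ whenever $\phi_w(K) \cap \phi_u(K) \neq \emptyset$ — is a combinatorial arc (a path graph). -/

import Mathlib

open Set

/-- `φ_w = φ_{i₁} ∘ ⋯ ∘ φ_{iₙ}` for a word `w = i₁ ⋯ iₙ`. -/
noncomputable def compWord {X : Type*} {k : ℕ} (φ : Fin k → X → X)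
    (w : List (Fin k)) : X → X :=
  w.foldr (fun i g => φ i ∘ g) id

section AuxArc

open Relation

lemma arc_lemma {V : Type*} [DecidableEq V] (E : V → V → Prop)
    (hsym : ∀ x y, E x y → E y x) (hirr : ∀ x, ¬ E x x) :
    ∀ (N : ℕ) (S : Finset V),
    S.card = N →
    (∀ x ∈ S, ∀ y ∈ S, ReflTransGen (fun a b => E a b ∧ a ∈ S ∧ b ∈ S) x y) →
    (∀ v ∈ S, ∀ a ∈ S, ∀ b ∈ S, ∀ c ∈ S,
        E v a → E v b → E v c → a = b ∨ a = c ∨ b = c) →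
    ∀ u₀ ∈ S, (∀ a ∈ S, ∀ b ∈ S, E u₀ a → E u₀ b → a = b) →
    ∃ e : Fin S.card → V, (∀ i, e i ∈ S) ∧ Function.Injective e ∧
      (∀ h : 0 < S.card, e ⟨0, h⟩ = u₀) ∧
      (∀ i j, E (e i) (e j) ↔ ((i : ℕ) + 1 = (j : ℕ) ∨ (j : ℕ) + 1 = (i : ℕ))) := by
  intro N
  induction N using Nat.strong_induction_on with
  | _ N IH =>
    intro S hcard hconn hdeg2 u₀ hu₀ hdeg1
    by_cases hz : ∃ z ∈ S, E u₀ z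
    · obtain ⟨z, hzS, hEz⟩ := hz
      have hzu : z ≠ u₀ := fun h => hirr u₀ (h ▸ hEz)
      have hzS' : z ∈ S.erase u₀ := Finset.mem_erase.mpr ⟨hzu, hzS⟩
      have hsub : S.erase u₀ ⊆ S := Finset.erase_subset _ _
      have hcard' : (S.erase u₀).card + 1 = S.card := Finset.card_erase_add_one hu₀
      have huniq : ∀ y ∈ S, E u₀ y → y = z := fun y hy hEy => hdeg1 y hy z hzS hEy hEz
      have excise : ∀ x y, ReflTransGen (fun a b => E a b ∧ a ∈ S ∧ b ∈ S) x y →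
          x ≠ u₀ →
          (y ≠ u₀ → ReflTransGen (fun a b => E a b ∧ a ∈ S.erase u₀ ∧ b ∈ S.erase u₀) x y) ∧
          (y = u₀ → ReflTransGen (fun a b => E a b ∧ a ∈ S.erase u₀ ∧ b ∈ S.erase u₀) x z) := by
        intro x y h hx
        induction h with
        | refl => exact ⟨fun _ => ReflTransGen.refl, fun h => absurd h hx⟩
        | @tail b c hxb hbc ih =>
          constructor
          · intro hc
            by_cases hb : b = u₀
            · subst hb
              have hcz : c = z := huniq c hbc.2.2 hbc.1
              exact hcz ▸ ih.2 rfl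
            · exact (ih.1 hb).tail ⟨hbc.1, Finset.mem_erase.mpr ⟨hb, hbc.2.1⟩,
                Finset.mem_erase.mpr ⟨hc, hbc.2.2⟩⟩
          · intro hc
            subst hc
            have hb : b = z := huniq b hbc.2.1 (hsym _ _ hbc.1)
            subst hb
            exact ih.1 hzu
      have hconn' : ∀ x ∈ S.erase u₀, ∀ y ∈ S.erase u₀,
          ReflTransGen (fun a b => E a b ∧ a ∈ S.erase u₀ ∧ b ∈ S.erase u₀) x y := by
        intro x hx y hy
        exact (excise x y (hconn x (hsub hx) y (hsub hy))
          (Finset.mem_erase.mp hx).1).1 (Finset.mem_erase.mp hy).1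
      have hdeg2' : ∀ v ∈ S.erase u₀, ∀ a ∈ S.erase u₀, ∀ b ∈ S.erase u₀, ∀ c ∈ S.erase u₀,
          E v a → E v b → E v c → a = b ∨ a = c ∨ b = c :=
        fun v hv a ha b hb c hc h1 h2 h3 =>
          hdeg2 v (hsub hv) a (hsub ha) b (hsub hb) c (hsub hc) h1 h2 h3
      have hdeg1' : ∀ a ∈ S.erase u₀, ∀ b ∈ S.erase u₀, E z a → E z b → a = b := by
        intro a ha b hb h1 h2
        rcases hdeg2 z hzS a (hsub ha) b (hsub hb) u₀ hu₀ h1 h2 (hsym _ _ hEz) with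
          h | h | h
        · exact h
        · exact absurd h (Finset.mem_erase.mp ha).1
        · exact absurd h (Finset.mem_erase.mp hb).1
      obtain ⟨e', hmem', hinj', hzero', hiff'⟩ :=
        IH (S.erase u₀).card (by omega) (S.erase u₀) rfl hconn' hdeg2' z hzS' hdeg1'
      have hM : 0 < (S.erase u₀).card := Finset.card_pos.mpr ⟨z, hzS'⟩
      refine ⟨fun i => if hi : (i : ℕ) = 0 then u₀
        else e' ⟨(i : ℕ) - 1, by have := i.isLt; omega⟩, ?_, ?_, ?_, ?_⟩
      · intro i
        dsimp only
        split
        · exact hu₀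
        · exact hsub (hmem' _)
      · intro i j hij
        dsimp only at hij
        split_ifs at hij with h1 h2 h2
        · exact Fin.ext (by omega)
        · exact absurd hij.symm (Finset.mem_erase.mp (hmem' _)).1
        · exact absurd hij (Finset.mem_erase.mp (hmem' _)).1
        · have := congrArg Fin.val (hinj' hij)
          simp only at this
          exact Fin.ext (by omega)
      · intro h; simp
      · intro i j
        by_cases hi : (i : ℕ) = 0 <;> by_cases hj : (j : ℕ) = 0
        · simp only [dif_pos hi, dif_pos hj]
          constructor
          · intro h; exact absurd h (hirr _)
          · intro h; omega
        · simp only [dif_pos hi, dif_neg hj]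
          have key : E u₀ (e' ⟨(j : ℕ) - 1, by have := j.isLt; omega⟩) ↔ (j : ℕ) = 1 := by
            constructor
            · intro h
              have h1 : e' ⟨(j : ℕ) - 1, by have := j.isLt; omega⟩ = z :=
                hdeg1 _ (hsub (hmem' _)) z hzS h hEz
              have h2 := hinj' (h1.trans (hzero' hM).symm)
              simp only [Fin.mk.injEq] at h2
              omega
            · intro h
              have h2 : (⟨(j : ℕ) - 1, by have := j.isLt; omega⟩ : Fin (S.erase u₀).card)
                  = ⟨0, hM⟩ := Fin.mk_eq_mk.mpr (by omega)
              rw [h2, hzero' hM]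
              exact hEz
          rw [key]; omega
        · simp only [dif_neg hi, dif_pos hj]
          have key : E (e' ⟨(i : ℕ) - 1, by have := i.isLt; omega⟩) u₀ ↔ (i : ℕ) = 1 := by
            constructor
            · intro h
              have h1 : e' ⟨(i : ℕ) - 1, by have := i.isLt; omega⟩ = z :=
                hdeg1 _ (hsub (hmem' _)) z hzS (hsym _ _ h) hEz
              have h2 := hinj' (h1.trans (hzero' hM).symm)
              simp only [Fin.mk.injEq] at h2
              omega
            · intro h
              have h2 : (⟨(i : ℕ) - 1, by have := i.isLt; omega⟩ : Fin (S.erase u₀).card)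
                  = ⟨0, hM⟩ := Fin.mk_eq_mk.mpr (by omega)
              rw [h2, hzero' hM]
              exact hsym _ _ hEz
          rw [key]; omega
        · simp only [dif_neg hi, dif_neg hj]
          rw [hiff']
          simp only
          omega
    · have hS1 : ∀ y ∈ S, y = u₀ := by
        intro y hy
        rcases (hconn u₀ hu₀ y hy).cases_head with h | ⟨b, hb, _⟩
        · exact h.symm
        · exact absurd ⟨b, hb.2.2, hb.1⟩ hz
      have hcard1 : S.card = 1 := by
        have hS : S = {u₀} := Finset.eq_singleton_iff_unique_mem.mpr ⟨hu₀, hS1⟩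
        simp [hS]
      refine ⟨fun _ => u₀, fun _ => hu₀, ?_, fun _ => rfl, ?_⟩
      · intro i j _
        exact Fin.ext (by have := i.isLt; have := j.isLt; omega)
      · intro i j
        have hi := i.isLt; have hj := j.isLt
        constructor
        · intro h; exact absurd h (hirr _)
        · intro h; exfalso; omega

lemma compWord_append {X : Type*} {k : ℕ} (φ : Fin k → X → X) (w u : List (Fin k)) :
    compWord φ (w ++ u) = compWord φ w ∘ compWord φ u := by
  induction w with
  | nil => rfl
  | cons i t ih =>
    show φ i ∘ compWord φ (t ++ u) = (φ i ∘ compWord φ t) ∘ compWord φ u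
    rw [ih, Function.comp_assoc]

lemma exists_ofFn_word {α : Type*} : ∀ (m : ℕ) (w : List α), w.length = m →
    ∃ f : Fin m → α, List.ofFn f = w := by
  intro m
  induction m with
  | zero =>
    intro w hw
    exact ⟨fun i => i.elim0, by simp [List.length_eq_zero_iff.mp hw]⟩
  | succ m ih =>
    intro w hw
    cases w with
    | nil => simp at hw
    | cons a t =>
      obtain ⟨f, hf⟩ := ih t (by simpa using hw)
      exact ⟨Fin.cons a f, by simp [List.ofFn_succ, Fin.cons_zero, Fin.cons_succ, hf]⟩

lemma finite_len_word {α : Type*} [Finite α] (m : ℕ) :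
    {w : List α | w.length = m}.Finite := by
  cases nonempty_fintype α
  apply (Set.finite_range (List.ofFn : (Fin m → α) → List α)).subset
  intro w hw
  obtain ⟨f, hf⟩ := exists_ofFn_word m w hw
  exact ⟨f, hf⟩

end AuxArc

/-- For an IFS with connected attractor of positive diameter and no branching, each
intersection graph `G_n` is a combinatorial arc: the length-`n` words can be enumerated so
that two cylinders intersect exactly when they are consecutive in the enumeration. -/
theorem stmt11 {X : Type*} [MetricSpace X] [CompleteSpace X] {k : ℕ}
    (φ : Fin k → X → X) (L : Fin k → ℝ)
    (hL : ∀ i, 0 < L i ∧ L i < 1)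
    (hLip : ∀ i x y, dist (φ i x) (φ i y) ≤ L i * dist x y)
    (K : Set X) (hKne : K.Nonempty) (hKc : IsCompact K)
    (hK : K = ⋃ i, φ i '' K) (hconn : IsConnected K)
    (hdiam : 0 < Metric.diam K)
    (hnb : ∀ (n : ℕ) (w : List (Fin k)), w.length = n →
      {u : List (Fin k) | u.length = n ∧ u ≠ w ∧
        (compWord φ u '' K ∩ compWord φ w '' K).Nonempty}.ncard ≤ 2)
    (n : ℕ) (hn : 1 ≤ n) :
    ∃ (N : ℕ) (e : Fin N → {w : List (Fin k) // w.length = n}),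
      Function.Bijective e ∧
      ∀ i j : Fin N,
        ((e i).1 ≠ (e j).1 ∧
          (compWord φ (e i).1 '' K ∩ compWord φ (e j).1 '' K).Nonempty)
        ↔ ((i : ℕ) + 1 = j ∨ (j : ℕ) + 1 = i) := by
  classical
  -- continuity of the maps
  have hφc : ∀ i, Continuous (φ i) := by
    intro i
    have hd : ∀ x y, dist (φ i x) (φ i y) ≤ ((L i).toNNReal : ℝ) * dist x y := by
      intro x y
      rw [Real.coe_toNNReal _ (le_of_lt (hL i).1)]
      exact hLip i x y
    exact (LipschitzWith.of_dist_le_mul hd).continuous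
  have hcont : ∀ w : List (Fin k), Continuous (compWord φ w) := by
    intro w
    induction w with
    | nil => exact continuous_id
    | cons i t ih => exact (hφc i).comp ih
  have Cne : ∀ w : List (Fin k), (compWord φ w '' K).Nonempty := fun w => hKne.image _
  have Ccl : ∀ w : List (Fin k), IsClosed (compWord φ w '' K) :=
    fun w => (hKc.image (hcont w)).isClosed
  have happ : ∀ (w u : List (Fin k)) (z : X),
      compWord φ (w ++ u) z = compWord φ w (compWord φ u z) :=
    fun w u z => congrFun (compWord_append φ w u) z
  -- the covering of K by cylinders of level m
  have cover : ∀ m : ℕ, ⋃ w ∈ {w : List (Fin k) | w.length = m}, compWord φ w '' K = K := by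
    intro m
    induction m with
    | zero =>
      have hs : {w : List (Fin k) | w.length = 0} = {([] : List (Fin k))} := by
        ext w; simp [List.length_eq_zero_iff]
      rw [hs]
      simp only [Set.biUnion_singleton]
      exact Set.image_id K
    | succ m ih =>
      apply Set.Subset.antisymm
      · intro x hx
        obtain ⟨w, hw, hxw⟩ := Set.mem_iUnion₂.mp hx
        cases w with
        | nil => simp at hw
        | cons i t =>
          have ht : t.length = m := by simpa using hw
          obtain ⟨y, hy, hyx⟩ : x ∈ φ i '' (compWord φ t '' K) := by
            rw [← Set.image_comp]; exact hxw
          have hyK : y ∈ K := by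
            rw [← ih]; exact Set.mem_biUnion ht hy
          rw [hK]
          exact Set.mem_iUnion.mpr ⟨i, ⟨y, hyK, hyx⟩⟩
      · intro x hx
        rw [hK] at hx
        obtain ⟨i, hi⟩ := Set.mem_iUnion.mp hx
        obtain ⟨y, hyK, hyx⟩ := hi
        have hy2 : y ∈ ⋃ t ∈ {t : List (Fin k) | t.length = m}, compWord φ t '' K := by
          rw [ih]; exact hyK
        obtain ⟨t, ht, z, hzK, hz⟩ := Set.mem_iUnion₂.mp hy2
        have ht' : t.length = m := ht
        refine Set.mem_biUnion (show (i :: t).length = m + 1 by simp [ht']) ⟨z, hzK, ?_⟩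
        show φ i (compWord φ t z) = x
        rw [hz, hyx]
  have CsubK : ∀ (m : ℕ) (w : List (Fin k)), w.length = m → compWord φ w '' K ⊆ K := by
    intro m w hw x hx
    rw [← cover m]
    exact Set.mem_biUnion hw hx
  -- the finset of words of length n
  set S : Finset (List (Fin k)) :=
    Finset.image (List.ofFn : (Fin n → Fin k) → List (Fin k)) Finset.univ with hSdef
  have mem_S : ∀ w : List (Fin k), w ∈ S ↔ w.length = n := by
    intro w
    simp only [hSdef, Finset.mem_image, Finset.mem_univ, true_and]
    constructor
    · rintro ⟨f, rfl⟩; simp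
    · intro hw; exact exists_ofFn_word n w hw
  -- the edge relation
  set Edge : List (Fin k) → List (Fin k) → Prop := fun w u =>
    w.length = n ∧ u.length = n ∧ w ≠ u ∧
      (compWord φ w '' K ∩ compWord φ u '' K).Nonempty with hEdgedef
  have hsym : ∀ x y, Edge x y → Edge y x := by
    intro x y h
    obtain ⟨p, hp1, hp2⟩ := h.2.2.2
    exact ⟨h.2.1, h.1, h.2.2.1.symm, ⟨p, hp2, hp1⟩⟩
  have hirr : ∀ x, ¬ Edge x x := fun x h => h.2.2.1 rfl
  -- lifting intersections along a common prefix
  have hlift : ∀ (w a b : List (Fin k)),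
      (compWord φ a '' K ∩ compWord φ b '' K).Nonempty →
      (compWord φ (w ++ a) '' K ∩ compWord φ (w ++ b) '' K).Nonempty := by
    rintro w a b ⟨u0, ⟨r, hrK, hr⟩, ⟨s, hsK, hs⟩⟩
    exact ⟨compWord φ w u0, ⟨r, hrK, by rw [happ, hr]⟩, ⟨s, hsK, by rw [happ, hs]⟩⟩
  -- degree bound
  have hdeg2 : ∀ v ∈ S, ∀ a ∈ S, ∀ b ∈ S, ∀ c ∈ S,
      Edge v a → Edge v b → Edge v c → a = b ∨ a = c ∨ b = c := by
    intro v hv a ha b hb c hc h1 h2 h3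
    by_contra hcon
    push_neg at hcon
    obtain ⟨hab, hac, hbc⟩ := hcon
    set T : Set (List (Fin k)) := {u : List (Fin k) | u.length = n ∧ u ≠ v ∧
      (compWord φ u '' K ∩ compWord φ v '' K).Nonempty} with hTdef
    have hsubT : ({a, b, c} : Set (List (Fin k))) ⊆ T := by
      intro u hu
      rcases hu with hu | hu | hu
      · subst hu
        obtain ⟨p, hp1, hp2⟩ := h1.2.2.2
        exact ⟨h1.2.1, h1.2.2.1.symm, ⟨p, hp2, hp1⟩⟩
      · subst hu
        obtain ⟨p, hp1, hp2⟩ := h2.2.2.2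
        exact ⟨h2.2.1, h2.2.2.1.symm, ⟨p, hp2, hp1⟩⟩
      · subst hu
        obtain ⟨p, hp1, hp2⟩ := h3.2.2.2
        exact ⟨h3.2.1, h3.2.2.1.symm, ⟨p, hp2, hp1⟩⟩
    have hfin : T.Finite := (finite_len_word n).subset (fun u hu => hu.1)
    have h3' : ({a, b, c} : Set (List (Fin k))).ncard = 3 := by
      rw [Set.ncard_insert_of_notMem (by simp [hab, hac]), Set.ncard_pair hbc]
    have hle := Set.ncard_le_ncard hsubT hfin
    have h2' := hnb n v ((mem_S v).mp hv)
    rw [h3', hTdef] at hle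
    omega
  -- S is nonempty
  have hSne : S.Nonempty := by
    obtain ⟨x0, hx0⟩ := hKne
    have : x0 ∈ ⋃ w ∈ {w : List (Fin k) | w.length = n}, compWord φ w '' K := by
      rw [cover n]; exact hx0
    obtain ⟨w, hwlen, -⟩ := Set.mem_iUnion₂.mp this
    exact ⟨w, (mem_S w).mpr hwlen⟩
  -- connectivity of the intersection graph
  have hconnE : ∀ x ∈ S, ∀ y ∈ S, Relation.ReflTransGen Edge x y := by
    intro x hx y hy
    set T : Set (List (Fin k)) := {w | w ∈ S ∧ Relation.ReflTransGen Edge x w} with hTdef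
    have hTfin : T.Finite := S.finite_toSet.subset (fun w hw => hw.1)
    have hT'fin : ((S : Set (List (Fin k))) \ T).Finite :=
      S.finite_toSet.subset Set.diff_subset
    have hUc : IsClosed (⋃ w ∈ T, compWord φ w '' K) :=
      hTfin.isClosed_biUnion fun w _ => Ccl w
    have hU'c : IsClosed (⋃ w ∈ ((S : Set (List (Fin k))) \ T), compWord φ w '' K) :=
      hT'fin.isClosed_biUnion fun w _ => Ccl w
    have hcov : K ⊆ (⋃ w ∈ T, compWord φ w '' K) ∪
        (⋃ w ∈ ((S : Set (List (Fin k))) \ T), compWord φ w '' K) := by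
      intro p hp
      have hp' : p ∈ ⋃ w ∈ {w : List (Fin k) | w.length = n}, compWord φ w '' K := by
        rw [cover n]; exact hp
      obtain ⟨w, hwlen, hpw⟩ := Set.mem_iUnion₂.mp hp'
      by_cases hwT : w ∈ T
      · exact Or.inl (Set.mem_biUnion hwT hpw)
      · exact Or.inr (Set.mem_biUnion ⟨(mem_S w).mpr hwlen, hwT⟩ hpw)
    have hdisj : Disjoint (⋃ w ∈ T, compWord φ w '' K)
        (⋃ w ∈ ((S : Set (List (Fin k))) \ T), compWord φ w '' K) := by
      rw [Set.disjoint_left]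
      intro p hp1 hp2
      obtain ⟨w, hwT, hpw⟩ := Set.mem_iUnion₂.mp hp1
      obtain ⟨u, huST, hpu⟩ := Set.mem_iUnion₂.mp hp2
      have hwu : w ≠ u := fun h => huST.2 (h ▸ hwT)
      have hedge : Edge w u :=
        ⟨(mem_S w).mp hwT.1, (mem_S u).mp huST.1, hwu, ⟨p, hpw, hpu⟩⟩
      exact huST.2 ⟨huST.1, hwT.2.tail hedge⟩
    rcases (isPreconnected_iff_subset_of_fully_disjoint_closed hKc.isClosed).mp
        hconn.isPreconnected _ _ hUc hU'c hcov hdisj with h | h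
    · obtain ⟨p, hp⟩ := Cne y
      have hpK : p ∈ K := CsubK n y ((mem_S y).mp hy) hp
      obtain ⟨w, hwT, hpw⟩ := Set.mem_iUnion₂.mp (h hpK)
      by_cases hwy : w = y
      · exact (hwy ▸ hwT).2
      · exact hwT.2.tail ⟨(mem_S w).mp hwT.1, (mem_S y).mp hy, hwy, ⟨p, hpw, hp⟩⟩
    · exfalso
      obtain ⟨p, hp⟩ := Cne x
      have hpK : p ∈ K := CsubK n x ((mem_S x).mp hx) hp
      obtain ⟨u, huST, hpu⟩ := Set.mem_iUnion₂.mp (h hpK)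
      have hxT : x ∈ T := ⟨hx, Relation.ReflTransGen.refl⟩
      have hxu : x ≠ u := fun he => huST.2 (he ▸ hxT)
      exact huST.2 ⟨huST.1, Relation.ReflTransGen.refl.tail
        ⟨(mem_S x).mp hx, (mem_S u).mp huST.1, hxu, ⟨p, hp, hpu⟩⟩⟩
  -- existence of a vertex of degree at most one
  have hdeg1ex : ∃ u₀ ∈ S, ∀ a ∈ S, ∀ b ∈ S, Edge u₀ a → Edge u₀ b → a = b := by
    by_contra hcon
    push_neg at hcon
    obtain ⟨w0, hw0⟩ := hSne
    obtain ⟨w', hw'S, b1, hb1S, hE1, hE1', hne1⟩ := hcon w0 hw0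
    have hw0len : w0.length = n := (mem_S w0).mp hw0
    have hw'len : w'.length = n := (mem_S w').mp hw'S
    -- a point in the intersection of the cylinders of w0 and w'
    obtain ⟨x, hx1, hx2⟩ := hE1.2.2.2
    -- x lies in a level-2n cylinder inside each
    obtain ⟨y, hyK, hyx⟩ := hx1
    have hy2 : y ∈ ⋃ t ∈ {t : List (Fin k) | t.length = n}, compWord φ t '' K := by
      rw [cover n]; exact hyK
    obtain ⟨a₀, ha₀len, z0, hz0K, hz0⟩ := Set.mem_iUnion₂.mp hy2
    have ha₀len' : a₀.length = n := ha₀len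
    have hxa : x ∈ compWord φ (w0 ++ a₀) '' K :=
      ⟨z0, hz0K, by rw [happ, hz0, hyx]⟩
    obtain ⟨y', hy'K, hy'x⟩ := hx2
    have hy'2 : y' ∈ ⋃ t ∈ {t : List (Fin k) | t.length = n}, compWord φ t '' K := by
      rw [cover n]; exact hy'K
    obtain ⟨b₀, hb₀len, z1, hz1K, hz1⟩ := Set.mem_iUnion₂.mp hy'2
    have hb₀len' : b₀.length = n := hb₀len
    have hxb : x ∈ compWord φ (w' ++ b₀) '' K :=
      ⟨z1, hz1K, by rw [happ, hz1, hy'x]⟩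
    -- two distinct neighbours of a₀
    have ha₀S : a₀ ∈ S := (mem_S a₀).mpr ha₀len'
    obtain ⟨p, hpS, q, hqS, hEp, hEq, hpq⟩ := hcon a₀ ha₀S
    have hplen : p.length = n := (mem_S p).mp hpS
    have hqlen : q.length = n := (mem_S q).mp hqS
    -- three distinct neighbours of w0 ++ a₀ at level n + n
    set T : Set (List (Fin k)) := {u : List (Fin k) | u.length = n + n ∧ u ≠ w0 ++ a₀ ∧
      (compWord φ u '' K ∩ compWord φ (w0 ++ a₀) '' K).Nonempty} with hTdef
    have hmem1 : w0 ++ p ∈ T := by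
      refine ⟨by simp [hw0len, hplen], ?_, ?_⟩
      · intro h
        exact hEp.2.2.1 ((List.append_inj h rfl).2.symm)
      · obtain ⟨u0, hu1, hu2⟩ := hEp.2.2.2
        exact hlift w0 p a₀ ⟨u0, hu2, hu1⟩
    have hmem2 : w0 ++ q ∈ T := by
      refine ⟨by simp [hw0len, hqlen], ?_, ?_⟩
      · intro h
        exact hEq.2.2.1 ((List.append_inj h rfl).2.symm)
      · obtain ⟨u0, hu1, hu2⟩ := hEq.2.2.2
        exact hlift w0 q a₀ ⟨u0, hu2, hu1⟩
    have hmem3 : w' ++ b₀ ∈ T := by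
      refine ⟨by simp [hw'len, hb₀len'], ?_, ⟨x, hxb, hxa⟩⟩
      intro h
      exact hE1.2.2.1 ((List.append_inj h (by rw [hw'len, hw0len])).1.symm)
    have hsubT : ({w0 ++ p, w0 ++ q, w' ++ b₀} : Set (List (Fin k))) ⊆ T := by
      intro u hu
      rcases hu with hu | hu | hu
      · exact hu ▸ hmem1
      · exact hu ▸ hmem2
      · exact hu ▸ hmem3
    have hww' : w0 ≠ w' := hE1.2.2.1
    have hd12 : w0 ++ p ≠ w0 ++ q := fun h => hpq ((List.append_inj h rfl).2)
    have hd13 : w0 ++ p ≠ w' ++ b₀ := fun h =>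
      hww' ((List.append_inj h (by rw [hw0len, hw'len])).1)
    have hd23 : w0 ++ q ≠ w' ++ b₀ := fun h =>
      hww' ((List.append_inj h (by rw [hw0len, hw'len])).1)
    have hfin : T.Finite := (finite_len_word (n + n)).subset (fun u hu => hu.1)
    have h3' : ({w0 ++ p, w0 ++ q, w' ++ b₀} : Set (List (Fin k))).ncard = 3 := by
      rw [Set.ncard_insert_of_notMem (by simp [hd12, hd13]), Set.ncard_pair hd23]
    have hle := Set.ncard_le_ncard hsubT hfin
    have h2' := hnb (n + n) (w0 ++ a₀) (by simp [hw0len, ha₀len'])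
    rw [h3', hTdef] at hle
    omega
  obtain ⟨u₀, hu₀S, hdeg1⟩ := hdeg1ex
  -- apply the combinatorial lemma
  obtain ⟨e, hmem, hinj, -, hiff⟩ :=
    arc_lemma Edge hsym hirr S.card S rfl
      (fun x hx y hy => Relation.ReflTransGen.mono
        (fun a b hab => ⟨hab, (mem_S a).mpr hab.1, (mem_S b).mpr hab.2.1⟩) _ _ (hconnE x hx y hy))
      hdeg2 u₀ hu₀S hdeg1
  -- surjectivity onto S
  have hsurj : ∀ w : List (Fin k), w.length = n → ∃ i, e i = w := by
    intro w hw
    by_contra hne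
    push_neg at hne
    have hwS : w ∈ S := (mem_S w).mpr hw
    have hf : Function.Injective (fun i : Fin S.card =>
        (⟨e i, Finset.mem_erase.mpr ⟨hne i, hmem i⟩⟩ : {x // x ∈ S.erase w})) :=
      fun i j hij => hinj (congrArg Subtype.val hij)
    have hcle := Fintype.card_le_of_injective _ hf
    simp only [Fintype.card_fin, Fintype.card_coe,
      Finset.card_erase_of_mem hwS] at hcle
    have hpos : 0 < S.card := Finset.card_pos.mpr ⟨w, hwS⟩
    omega
  refine ⟨S.card, fun i => ⟨e i, (mem_S _).mp (hmem i)⟩, ⟨?_, ?_⟩, ?_⟩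
  · intro i j h
    exact hinj (congrArg Subtype.val h)
  · rintro ⟨w, hw⟩
    obtain ⟨i, hi⟩ := hsurj w hw
    exact ⟨i, Subtype.ext hi⟩
  · intro i j
    rw [← hiff i j]
    constructor
    · intro h
      exact ⟨(mem_S _).mp (hmem i), (mem_S _).mp (hmem j), h.1, h.2⟩
    · intro h
      exact ⟨h.2.2.1, h.2.2.2⟩
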